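/- Let σ > 0, ρ(x) = exp(-|x|/σ)/(2σ), and let u : ℝ → ℝ be measurable with 0 ≤ u ≤ 1, u nontrivial (positive on a set of positive measure in (-∞, h)), and u(x) = 0 for x ≥ h. Then -(ρ' ⋆ u)(h) > 0. -/
import Mathlib


open MeasureTheory

noncomputable def ρ' (σ x : ℝ) : ℝ := -Real.sign x * Real.exp (-|x| / σ) / (2 * σ ^ 2)

set_option maxHeartbeats 1000000 in
theorem separatrix_speed_pos (σ h : ℝ) (hσ : 0 < σ) (u : ℝ → ℝ)
    (hu : Measurable u) (h0 : ∀ x, 0 ≤ u x) (h1 : ∀ x, u x ≤ 1)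
    (hz : ∀ x, h ≤ x → u x = 0)
    (hnt : 0 < volume {y : ℝ | y < h ∧ 0 < u y}) :
    0 < -(∫ y, ρ' σ (h - y) * u y) := by
  set f : ℝ → ℝ := fun y => Real.exp (-(h - y) / σ) / (2 * σ ^ 2) * u y with hfdef
  have heq : ∀ y, -(ρ' σ (h - y) * u y) = (Set.Iio h).indicator f y := by
    intro y
    by_cases hy : y < h
    · rw [Set.indicator_of_mem (Set.mem_Iio.mpr hy)]
      have hpos : 0 < h - y := by linarith
      simp only [ρ', Real.sign_of_pos hpos, abs_of_pos hpos, hfdef]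
      ring
    · rw [Set.indicator_of_notMem (by simpa using hy), hz y (not_lt.mp hy), mul_zero, neg_zero]
  -- integrability of the bounding exponential on (-∞, h)
  have hmp : MeasurePreserving (fun y : ℝ => h - y) volume volume :=
    Measure.measurePreserving_sub_left (volume : Measure ℝ) h
  have hemb : MeasurableEmbedding (fun y : ℝ => h - y) :=
    (Homeomorph.subLeft h).measurableEmbedding
  have hexp : IntegrableOn (fun x : ℝ => Real.exp (-x / σ)) (Set.Ioi 0) := by
    have h' := exp_neg_integrableOn_Ioi 0 (show 0 < 1 / σ by positivity)
    have hfun : (fun x : ℝ => Real.exp (-(1 / σ) * x)) = fun x => Real.exp (-x / σ) := by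
      funext x; congr 1; ring
    rwa [hfun] at h'
  have hpre : (fun y : ℝ => h - y) ⁻¹' Set.Ioi 0 = Set.Iio h := by
    ext y
    simp only [Set.mem_preimage, Set.mem_Ioi, Set.mem_Iio]
    constructor <;> intro <;> linarith
  have hB : IntegrableOn (fun y : ℝ => Real.exp (-(h - y) / σ)) (Set.Iio h) := by
    have := (hmp.integrableOn_comp_preimage hemb
      (f := fun x : ℝ => Real.exp (-x / σ)) (s := Set.Ioi 0)).mpr hexp
    rwa [hpre] at this
  have hint : Integrable ((Set.Iio h).indicator f) := by
    rw [integrable_indicator_iff measurableSet_Iio]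
    refine Integrable.mono' (hB.div_const (2 * σ ^ 2)) ?_ ?_
    · exact (((Real.measurable_exp.comp
        (((measurable_const.sub measurable_id).neg).div_const σ)).div_const
        (2 * σ ^ 2)).mul hu).aestronglyMeasurable.restrict
    · filter_upwards with y
      have h2 : (0:ℝ) < 2 * σ ^ 2 := by positivity
      rw [Real.norm_eq_abs, abs_mul, abs_of_nonneg (by positivity : (0:ℝ) ≤ Real.exp (-(h - y) / σ) / (2 * σ ^ 2)),
        abs_of_nonneg (h0 y)]
      calc Real.exp (-(h - y) / σ) / (2 * σ ^ 2) * u y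
          ≤ Real.exp (-(h - y) / σ) / (2 * σ ^ 2) * 1 := by
            exact mul_le_mul_of_nonneg_left (h1 y) (by positivity)
        _ = Real.exp (-(h - y) / σ) / (2 * σ ^ 2) := mul_one _
  have hnonneg : 0 ≤ (Set.Iio h).indicator f :=
    Set.indicator_nonneg (fun y _ => mul_nonneg (by positivity) (h0 y))
  have hstep : (∫ y, -(ρ' σ (h - y) * u y)) = ∫ y, (Set.Iio h).indicator f y := by
    congr 1; funext y; exact heq y
  rw [← integral_neg, hstep]
  rw [integral_pos_iff_support_of_nonneg hnonneg hint]
  refine lt_of_lt_of_le hnt (measure_mono ?_)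
  rintro y ⟨hy1, hy2⟩
  rw [Function.mem_support, Set.indicator_of_mem (Set.mem_Iio.mpr hy1)]
  exact (mul_pos (by positivity) hy2).ne'
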